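/- The family C of ℕ∞-valued divergences on the cost-counting monad T = ℕ × (−) on Set, defined by C_I((i,x),(j,y)) = |i − j|, satisfies Top-unit-reflexivity (C_I(η x, η y) = 0 for all x, y ∈ I) and Top-composability: for all f, g : I → ℕ × J and (i,x), (j,y) ∈ ℕ × I, C_J(f♯(i,x), g♯(j,y)) ≤ C_I((i,x),(j,y)) + sup over (x',y') ∈ I × I of C_J(f x', g y'). -/

import Mathlib

/-- Kleisli extension for the cost-counting monad `T I = ℕ × I` on `Set`. -/
def costSharp {I J : Type*} (f : I → ℕ × J) (c : ℕ × I) : ℕ × J :=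
  (c.1 + (f c.2).1, (f c.2).2)

/-- The divergence `C_I((i,x),(j,y)) = |i − j|` valued in `ℕ∞`. -/
def costC {I : Type*} (c d : ℕ × I) : ℕ∞ := (Nat.dist c.1 d.1 : ℕ∞)

theorem costC_top_unit_reflexive_and_composable {I J : Type*} :
    (∀ x y : I, costC ((0, x) : ℕ × I) (0, y) = 0) ∧
    (∀ (f g : I → ℕ × J) (c₁ c₂ : ℕ × I),
      costC (costSharp f c₁) (costSharp g c₂) ≤
        costC c₁ c₂ + ⨆ p : I × I, costC (f p.1) (g p.2)) := by
  constructor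
  · intro x y
    simp [costC, Nat.dist]
  · intro f g c₁ c₂
    have h1 : costC (costSharp f c₁) (costSharp g c₂) ≤
        costC c₁ c₂ + costC (f c₁.2) (g c₂.2) := by
      simp only [costC, costSharp]
      rw [← Nat.cast_add]
      have := (Nat.dist.triangle_inequality (c₁.1 + (f c₁.2).1) (c₂.1 + (f c₁.2).1) (c₂.1 + (g c₂.2).1))
      rw [Nat.dist_add_add_right, Nat.dist_add_add_left] at this
      exact_mod_cast this
    refine h1.trans (add_le_add_right ?_ _)
    exact le_iSup (fun p : I × I => costC (f p.1) (g p.2)) (c₁.2, c₂.2)
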